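/- Let C be an (X,1)-neighbour-transitive code in H(m,q) with minimum distance δ ≥ 3 and |C| > 1. Then for every entry i ∈ M, the induced group X_i^{Q_i} acts 2-transitively on Q_i. -/

import Mathlib

set_option linter.unusedSectionVars false
set_option linter.unusedVariables false
set_option maxHeartbeats 1000000


open Equiv

namespace Paper

/-- A Hamming-graph automorphism of `Fin m → Q` given by entrywise permutations `h`
and a permutation `σ` of the entries. -/
def IsQAutPair {m : ℕ} {Q : Type*} (g : Perm (Fin m → Q)) (h : Fin m → Perm Q)
    (σ : Perm (Fin m)) : Prop :=
  ∀ α i, g α i = h i (α (σ.symm i))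

/-- `g` is an automorphism of the Hamming graph `H(m,q)`. -/
def IsQAut {m : ℕ} {Q : Type*} (g : Perm (Fin m → Q)) : Prop :=
  ∃ h σ, IsQAutPair g h σ

/-- The permutation group `X_i^{Q_i}` induced on the alphabet in entry `i`
by the stabiliser in `X` of the entry `i`. -/
def indQ {m : ℕ} {Q : Type*} (X : Set (Perm (Fin m → Q))) (i : Fin m) : Set (Perm Q) :=
  {π | ∃ g ∈ X, ∃ h σ, IsQAutPair g h σ ∧ σ i = i ∧ h i = π}

/-- `C_s`, the set of vertices at Hamming distance exactly `s` from the code `C`. -/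
def distSet {m : ℕ} {Q : Type*} [DecidableEq Q] (C : Set (Fin m → Q)) (s : ℕ) :
    Set (Fin m → Q) :=
  {v | (∃ c ∈ C, hammingDist v c = s) ∧ ∀ c ∈ C, s ≤ hammingDist v c}

/-- `C` is `(X,s)`-neighbour-transitive: `X` acts transitively on each of
`C = C_0, C_1, …, C_s`. -/
def NbrTrans {m : ℕ} {Q : Type*} [DecidableEq Q] (X : Set (Perm (Fin m → Q)))
    (C : Set (Fin m → Q)) (s : ℕ) : Prop :=
  ∀ j ≤ s, ∀ u ∈ distSet C j, ∀ v ∈ distSet C j, ∃ g ∈ X, g u = v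

/-- `δ` is the minimum distance of the code `C`. -/
def IsMinDist {m : ℕ} {Q : Type*} [DecidableEq Q] (C : Set (Fin m → Q)) (δ : ℕ) : Prop :=
  (∃ u ∈ C, ∃ v ∈ C, u ≠ v ∧ hammingDist u v = δ) ∧
  ∀ u ∈ C, ∀ v ∈ C, u ≠ v → δ ≤ hammingDist u v


section Aux

variable {m : ℕ} {Q : Type*} [Fintype Q] [DecidableEq Q]

lemma filter_update (α : Fin m → Q) (k : Fin m) {x : Q} (hx : x ≠ α k) :
    (Finset.univ.filter fun j => Function.update α k x j ≠ α j) = {k} := by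
  ext j
  rcases eq_or_ne j k with rfl | hj
  · simp [hx]
  · simp [Function.update_of_ne hj, hj]

lemma hd_update (α : Fin m → Q) (k : Fin m) {x : Q} (hx : x ≠ α k) :
    hammingDist (Function.update α k x) α = 1 := by
  show (Finset.univ.filter fun j => Function.update α k x j ≠ α j).card = 1
  rw [filter_update α k hx]; simp

lemma pair_diff_filter {g : Perm (Fin m → Q)} {h : Fin m → Perm Q} {σ : Perm (Fin m)}
    (hp : IsQAutPair g h σ) (u v : Fin m → Q) :
    (Finset.univ.filter fun j => g u j ≠ g v j)
      = (Finset.univ.filter fun j => u j ≠ v j).map σ.toEmbedding := by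
  ext j
  simp only [Finset.mem_filter, Finset.mem_map, Finset.mem_univ, true_and,
    Equiv.coe_toEmbedding]
  rw [hp u j, hp v j, (h j).injective.ne_iff]
  constructor
  · intro hj
    exact ⟨σ.symm j, hj, by simp⟩
  · rintro ⟨k, hk, rfl⟩
    simpa using hk

lemma hd_map {g : Perm (Fin m → Q)} {h : Fin m → Perm Q} {σ : Perm (Fin m)}
    (hp : IsQAutPair g h σ) (u v : Fin m → Q) :
    hammingDist (g u) (g v) = hammingDist u v := by
  show (Finset.univ.filter fun j => g u j ≠ g v j).card
      = (Finset.univ.filter fun j => u j ≠ v j).card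
  rw [pair_diff_filter hp u v, Finset.card_map]

variable {C : Set (Fin m → Q)} {X : Subgroup (Perm (Fin m → Q))}

/-- A neighbour of a codeword lies in `C_1` (when `δ ≥ 3`). -/
lemma mem_C1 (hδ : ∀ u ∈ C, ∀ v ∈ C, u ≠ v → 3 ≤ hammingDist u v)
    {α : Fin m → Q} (hα : α ∈ C) (k : Fin m) {x : Q} (hx : x ≠ α k) :
    Function.update α k x ∈ distSet C 1 := by
  set ν := Function.update α k x with hν
  have h1 : hammingDist ν α = 1 := hd_update α k hx
  refine ⟨⟨α, hα, h1⟩, fun c hc => ?_⟩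
  by_contra hlt
  have h0 : hammingDist ν c = 0 := by omega
  have : ν = c := eq_of_hammingDist_eq_zero h0
  subst this
  have hne : ν ≠ α := by
    intro he; rw [he] at h1; simp at h1
  have := hδ ν hc α hα hne
  omega

/-- The key construction lemma. -/
lemma basic (hXaut : ∀ g ∈ X, IsQAut g)
    (hXC : ∀ g ∈ X, g '' C = C)
    (hNT : NbrTrans (X : Set (Perm (Fin m → Q))) C 1)
    (hδ : ∀ u ∈ C, ∀ v ∈ C, u ≠ v → 3 ≤ hammingDist u v)
    {α β : Fin m → Q} (hα : α ∈ C) (hβ : β ∈ C) (k k' : Fin m)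
    {x y : Q} (hx : x ≠ α k) (hy : y ≠ β k') :
    ∃ g ∈ X, ∃ h σ, IsQAutPair g h σ ∧ g α = β ∧ σ k = k' ∧
      h k' (α k) = β k' ∧ h k' x = y := by
  set ν := Function.update α k x with hνdef
  set μ := Function.update β k' y with hμdef
  obtain ⟨g, hgX, hgνμ⟩ := hNT 1 le_rfl ν (mem_C1 hδ hα k hx) μ (mem_C1 hδ hβ k' hy)
  obtain ⟨h, σ, hp⟩ := hXaut g hgX
  have hgαC : g α ∈ C := by
    rw [← hXC g hgX]; exact ⟨α, hα, rfl⟩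
  -- g α = β
  have hd1 : hammingDist μ (g α) = 1 := by
    rw [← hgνμ, hd_map hp, hd_update α k hx]
  have hgαβ : g α = β := by
    by_contra hne
    have h3 := hδ (g α) hgαC β hβ hne
    have t1 : hammingDist (g α) β ≤ hammingDist (g α) μ + hammingDist μ β :=
      hammingDist_triangle _ _ _
    rw [hammingDist_comm (g α) μ] at t1
    have h2 : hammingDist μ β = 1 := hd_update β k' hy
    omega
  -- σ k = k'
  have hfilt := pair_diff_filter hp ν α
  rw [hgνμ, hgαβ, filter_update α k hx, filter_update β k' hy,
    Finset.map_singleton] at hfilt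
  have hσk : σ k = k' := by
    have := Finset.mem_singleton.mp (hfilt ▸ Finset.mem_singleton_self (σ k))
    exact this
  refine ⟨g, hgX, h, σ, hp, hgαβ, hσk, ?_, ?_⟩
  · have := hp α (σ k)
    rw [hgαβ, Equiv.symm_apply_apply, hσk] at this
    exact this.symm
  · have := hp ν (σ k)
    rw [hgνμ, Equiv.symm_apply_apply, hσk] at this
    simp only [hνdef, hμdef, Function.update_self] at this
    exact this.symm

/-- The basic two-point elements of `X_i^{Q_i}`. -/
lemma Elem (hXaut : ∀ g ∈ X, IsQAut g)
    (hXC : ∀ g ∈ X, g '' C = C)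
    (hNT : NbrTrans (X : Set (Perm (Fin m → Q))) C 1)
    (hδ : ∀ u ∈ C, ∀ v ∈ C, u ≠ v → 3 ≤ hammingDist u v)
    {α β : Fin m → Q} (hα : α ∈ C) (hβ : β ∈ C) (i : Fin m)
    {x y : Q} (hx : x ≠ α i) (hy : y ≠ β i) :
    ∃ π ∈ indQ (X : Set (Perm (Fin m → Q))) i, π x = y ∧ π (α i) = β i := by
  obtain ⟨g, hgX, h, σ, hp, _, hσ, h1, h2⟩ := basic hXaut hXC hNT hδ hα hβ i i hx hy
  exact ⟨h i, ⟨g, hgX, h, σ, hp, hσ, rfl⟩, h2, h1⟩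

lemma indQ_inv {i : Fin m} {π : Perm Q}
    (hπ : π ∈ indQ (X : Set (Perm (Fin m → Q))) i) :
    π⁻¹ ∈ indQ (X : Set (Perm (Fin m → Q))) i := by
  obtain ⟨g, hgX, h, σ, hp, hσ, hh⟩ := hπ
  have hσs : σ⁻¹ i = i := by
    apply σ.injective
    rw [← Perm.mul_apply, mul_inv_cancel, Perm.one_apply, hσ]
  refine ⟨g⁻¹, inv_mem hgX, fun k => (h (σ k))⁻¹, σ⁻¹, ?_, hσs, ?_⟩
  · intro β j
    have key := hp (g⁻¹ β) (σ j)
    rw [← Perm.mul_apply, mul_inv_cancel, Perm.one_apply, Equiv.symm_apply_apply] at key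
    show (g⁻¹ : Perm _) β j = (h (σ j))⁻¹ (β (σ⁻¹.symm j))
    rw [show (σ⁻¹ : Perm (Fin m)).symm j = σ j from rfl, key, ← Perm.mul_apply, inv_mul_cancel, Perm.one_apply]
  · show (h (σ i))⁻¹ = π⁻¹
    rw [hσ, hh]

lemma indQ_mul {i : Fin m} {π₁ π₂ : Perm Q}
    (h1 : π₁ ∈ indQ (X : Set (Perm (Fin m → Q))) i)
    (h2 : π₂ ∈ indQ (X : Set (Perm (Fin m → Q))) i) :
    π₂ * π₁ ∈ indQ (X : Set (Perm (Fin m → Q))) i := by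
  obtain ⟨g1, hg1, h1f, σ1, hp1, hσ1, hh1⟩ := h1
  obtain ⟨g2, hg2, h2f, σ2, hp2, hσ2, hh2⟩ := h2
  have hσ2s : σ2.symm i = i := by rw [Equiv.symm_apply_eq, hσ2]
  refine ⟨g2 * g1, mul_mem hg2 hg1, fun k => h2f k * h1f (σ2.symm k), σ2 * σ1, ?_, ?_, ?_⟩
  · intro α j
    show g2 (g1 α) j = _
    rw [hp2 (g1 α) j, hp1 α (σ2.symm j)]
    rfl
  · show σ2 (σ1 i) = i
    rw [hσ1, hσ2]
  · show h2f i * h1f (σ2.symm i) = π₂ * π₁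
    rw [hσ2s, hh1, hh2]

/-- Two codewords differ in entry `i`. -/
lemma rho_nontriv (hXaut : ∀ g ∈ X, IsQAut g)
    (hXC : ∀ g ∈ X, g '' C = C)
    (hNT : NbrTrans (X : Set (Perm (Fin m → Q))) C 1)
    (hδ : ∀ u ∈ C, ∀ v ∈ C, u ≠ v → 3 ≤ hammingDist u v)
    (hC : C.Nontrivial) (hq2 : ∀ z : Q, ∃ z', z' ≠ z) (i : Fin m) :
    ∃ α ∈ C, ∃ β ∈ C, α i ≠ β i := by
  by_contra hcon
  push_neg at hcon
  obtain ⟨u, hu, v, hv, huv⟩ := hC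
  apply huv
  funext k
  obtain ⟨α₀, hα₀⟩ : ∃ α₀, α₀ ∈ C := ⟨u, hu⟩
  obtain ⟨x, hx⟩ := hq2 (α₀ i)
  obtain ⟨y, hy⟩ := hq2 (α₀ k)
  obtain ⟨g, hgX, h, σ, hp, _, hσ, _, _⟩ := basic hXaut hXC hNT hδ hα₀ hα₀ i k hx hy
  obtain ⟨u', hu', hgu⟩ : ∃ u', u' ∈ C ∧ g u' = u := by
    have : u ∈ g '' C := by rw [hXC g hgX]; exact hu
    obtain ⟨u', h1, h2⟩ := this; exact ⟨u', h1, h2⟩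
  obtain ⟨v', hv', hgv⟩ : ∃ v', v' ∈ C ∧ g v' = v := by
    have : v ∈ g '' C := by rw [hXC g hgX]; exact hv
    obtain ⟨v', h1, h2⟩ := this; exact ⟨v', h1, h2⟩
  have e1 : u k = h k (u' i) := by
    have := hp u' (σ i)
    rw [hgu, Equiv.symm_apply_apply, hσ] at this
    exact this
  have e2 : v k = h k (v' i) := by
    have := hp v' (σ i)
    rw [hgv, Equiv.symm_apply_apply, hσ] at this
    exact this
  rw [e1, e2, hcon u' hu' v' hv']

/-- Reduction: any pair maps to the canonical pair `(α₂ i, α₁ i)`. -/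
lemma reduce (hXaut : ∀ g ∈ X, IsQAut g)
    (hXC : ∀ g ∈ X, g '' C = C)
    (hNT : NbrTrans (X : Set (Perm (Fin m → Q))) C 1)
    (hδ : ∀ u ∈ C, ∀ v ∈ C, u ≠ v → 3 ≤ hammingDist u v)
    {α₁ α₂ : Fin m → Q} (hα₁ : α₁ ∈ C) (hα₂ : α₂ ∈ C) {i : Fin m}
    (h12 : α₁ i ≠ α₂ i) {a b : Q} (hab : a ≠ b) :
    ∃ π ∈ indQ (X : Set (Perm (Fin m → Q))) i, π a = α₂ i ∧ π b = α₁ i := by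
  by_cases hb : ∃ α ∈ C, α i = b
  · obtain ⟨α, hαC, hαb⟩ := hb
    have hx : a ≠ α i := by rw [hαb]; exact hab
    have hy : α₂ i ≠ α₁ i := h12.symm
    obtain ⟨π, hπ, e1, e2⟩ := Elem hXaut hXC hNT hδ hαC hα₁ i hx hy
    exact ⟨π, hπ, e1, by rw [hαb] at e2; exact e2⟩
  · push_neg at hb
    -- step 1 : b ↦ α₁ i
    have hx1 : b ≠ α₁ i := fun he => hb α₁ hα₁ he.symm
    obtain ⟨π₁, hπ₁, e1, e2⟩ := Elem hXaut hXC hNT hδ hα₁ hα₂ i hx1 h12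
    have ha₁ : π₁ a ≠ α₁ i := by
      rw [← e1]
      exact fun he => hab (π₁.injective he)
    obtain ⟨π₂, hπ₂, f1, f2⟩ := Elem hXaut hXC hNT hδ hα₁ hα₁ i ha₁ h12.symm
    refine ⟨π₂ * π₁, indQ_mul hπ₁ hπ₂, ?_, ?_⟩
    · rw [Perm.mul_apply, f1]
    · rw [Perm.mul_apply, e1, f2]

end Aux

theorem stmt17 (m q : ℕ) (Q : Type) [Fintype Q] [DecidableEq Q]
    (hq : Fintype.card Q = q)
    (C : Set (Fin m → Q)) (X : Subgroup (Perm (Fin m → Q)))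
    (hXaut : ∀ g ∈ X, IsQAut g)
    (hXC : ∀ g ∈ X, g '' C = C)
    (hNT : NbrTrans (X : Set (Perm (Fin m → Q))) C 1)
    (hδ : ∀ u ∈ C, ∀ v ∈ C, u ≠ v → 3 ≤ hammingDist u v)
    (hC : C.Nontrivial) :
    ∀ i : Fin m, ∀ a b a' b' : Q, a ≠ b → a' ≠ b' →
      ∃ π ∈ indQ (X : Set (Perm (Fin m → Q))) i, π a = a' ∧ π b = b' := by
  intro i a b a' b' hab ha'b'
  have hq2 : ∀ z : Q, ∃ z', z' ≠ z := by
    intro z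
    rcases eq_or_ne z a with rfl | hz
    · exact ⟨b, fun h => hab h.symm⟩
    · exact ⟨a, hz.symm⟩
  obtain ⟨α₁, hα₁, α₂, hα₂, h12⟩ := rho_nontriv hXaut hXC hNT hδ hC hq2 i
  obtain ⟨π₁, hπ₁, e1, e2⟩ := reduce hXaut hXC hNT hδ hα₁ hα₂ h12 hab
  obtain ⟨π₂, hπ₂, f1, f2⟩ := reduce hXaut hXC hNT hδ hα₁ hα₂ h12 ha'b'
  refine ⟨π₂⁻¹ * π₁, indQ_mul hπ₁ (indQ_inv hπ₂), ?_, ?_⟩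
  · rw [Perm.mul_apply, e1, ← f1, ← Perm.mul_apply, inv_mul_cancel, Perm.one_apply]
  · rw [Perm.mul_apply, e2, ← f2, ← Perm.mul_apply, inv_mul_cancel, Perm.one_apply]

end Paper
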